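/- For every a > 0, b ∈ (0,1), x ∈ [0,1] and n ≥ 1, writing x_k = f_{a,b}^k(x), the n-th iterate satisfies the closed formula x_n = x / (x + (1-x)·exp(a·Σ_{k=0}^{n-1}(x_k − b))). -/

import Mathlib

/-- The map `f_{a,b}(x) = x / (x + (1-x) * exp (a (x - b)))`. -/
noncomputable def chaosMap (a b : ℝ) : ℝ → ℝ :=
  fun x => x / (x + (1 - x) * Real.exp (a * (x - b)))

lemma chaos_denom_pos (x t : ℝ) (h0 : 0 ≤ x) (h1 : x ≤ 1) :
    0 < x + (1 - x) * Real.exp t := by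
  rcases eq_or_lt_of_le h0 with h | h
  · simpa [← h] using Real.exp_pos t
  · have : 0 ≤ (1 - x) * Real.exp t :=
      mul_nonneg (by linarith) (Real.exp_pos t).le
    linarith

lemma chaosMap_mem (a b : ℝ) {x : ℝ} (hx : x ∈ Set.Icc (0 : ℝ) 1) :
    chaosMap a b x ∈ Set.Icc (0 : ℝ) 1 := by
  obtain ⟨h0, h1⟩ := hx
  have hD := chaos_denom_pos x (a * (x - b)) h0 h1
  constructor
  · exact div_nonneg h0 hD.le
  · rw [chaosMap, div_le_one hD]
    have : 0 ≤ (1 - x) * Real.exp (a * (x - b)) :=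
      mul_nonneg (by linarith) (Real.exp_pos _).le
    linarith

lemma chaos_iter_mem (a b : ℝ) {x : ℝ} (hx : x ∈ Set.Icc (0 : ℝ) 1) (n : ℕ) :
    (chaosMap a b)^[n] x ∈ Set.Icc (0 : ℝ) 1 := by
  induction n with
  | zero => simpa using hx
  | succ n ih => rw [Function.iterate_succ_apply']; exact chaosMap_mem a b ih

/-- For every `a > 0`, `b ∈ (0,1)`, `x ∈ [0,1]` and `n ≥ 1`, writing
`x_k = f_{a,b}^k(x)`, we have
`x_n = x / (x + (1-x) exp (a Σ_{k<n} (x_k - b)))`. -/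
theorem stmt_5 (a b : ℝ) (ha : 0 < a) (hb : b ∈ Set.Ioo (0 : ℝ) 1)
    (x : ℝ) (hx : x ∈ Set.Icc (0 : ℝ) 1) (n : ℕ) (hn : 1 ≤ n) :
    (chaosMap a b)^[n] x =
      x / (x + (1 - x) *
        Real.exp (a * ∑ k ∈ Finset.range n, ((chaosMap a b)^[k] x - b))) := by
  obtain ⟨h0, h1⟩ := hx
  induction n, hn using Nat.le_induction with
  | base => simp [chaosMap]
  | succ n hn ih =>
    set S := ∑ k ∈ Finset.range n, ((chaosMap a b)^[k] x - b) with hS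
    set E := Real.exp (a * S) with hE
    have hEpos : 0 < E := Real.exp_pos _
    have hD : 0 < x + (1 - x) * E := chaos_denom_pos x _ h0 h1
    set D := x + (1 - x) * E with hDdef
    have hxn : (chaosMap a b)^[n] x = x / D := ih
    set F := Real.exp (a * (x / D - b)) with hF
    have hFpos : 0 < F := Real.exp_pos _
    have hsum : ∑ k ∈ Finset.range (n + 1), ((chaosMap a b)^[k] x - b)
        = S + (x / D - b) := by
      rw [Finset.sum_range_succ, hxn]
    have hexp : Real.exp (a * (S + (x / D - b))) = E * F := by
      rw [mul_add, Real.exp_add]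
    have hD' : 0 < x + (1 - x) * (E * F) := by
      rcases eq_or_lt_of_le h0 with h | h
      · rw [← h]; simpa using mul_pos hEpos hFpos
      · have : 0 ≤ (1 - x) * (E * F) :=
          mul_nonneg (by linarith) (mul_pos hEpos hFpos).le
        linarith
    rw [Function.iterate_succ_apply', hxn, hsum, hexp, chaosMap]
    have key : x / D + (1 - x / D) * F = (x + (1 - x) * (E * F)) / D := by
      field_simp
      ring
    rw [key]
    rw [div_div_div_eq, mul_comm]
    exact mul_div_mul_left _ _ hD.ne'
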